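/- Let μ and ν be probability measures on ℝ, both supported on a compact set of diameter 2M (i.e., supported in an interval of length 2M). Then the squared Wasserstein-2 distance satisfies W₂²(μ, ν) ≤ 4M² · sup_{t ∈ ℝ} |F_μ(t) − F_ν(t)|, where F_μ and F_ν are the cumulative distribution functions of μ and ν. -/

import Mathlib

open MeasureTheory ProbabilityTheory Set

/-- Generalized quantile function of a measure on ℝ. -/
noncomputable def quantile (μ : Measure ℝ) (u : ℝ) : ℝ :=
  sInf {x : ℝ | u ≤ cdf μ x}

section aux
variable {M : ℝ} {μ : Measure ℝ} [IsProbabilityMeasure μ]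

lemma aux_M_nonneg (hμ : μ (Icc (-M) M)ᶜ = 0) : 0 ≤ M := by
  by_contra h
  push_neg at h
  have he : Icc (-M) M = (∅ : Set ℝ) := Icc_eq_empty (by linarith)
  rw [he, compl_empty] at hμ
  simpa [hμ] using (measure_univ (μ := μ))

lemma aux_cdf_one (hμ : μ (Icc (-M) M)ᶜ = 0) {x : ℝ} (hx : M ≤ x) : cdf μ x = 1 := by
  have h0 : μ (Iic x)ᶜ = 0 := by
    refine measure_mono_null ?_ hμ
    intro y hy
    simp only [compl_Iic, mem_Ioi] at hy
    simp only [mem_compl_iff, mem_Icc, not_and_or, not_le]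
    right; linarith
  have h1 : μ (Iic x) = 1 := by
    rwa [prob_compl_eq_zero_iff measurableSet_Iic] at h0
  rw [cdf_eq_real, measureReal_def, h1, ENNReal.toReal_one]

lemma aux_cdf_zero (hμ : μ (Icc (-M) M)ᶜ = 0) {x : ℝ} (hx : x < -M) : cdf μ x = 0 := by
  have h0 : μ (Iic x) = 0 := by
    refine measure_mono_null ?_ hμ
    intro y hy
    simp only [mem_Iic] at hy
    simp only [mem_compl_iff, mem_Icc, not_and_or, not_le]
    left; linarith
  rw [cdf_eq_real, measureReal_def, h0, ENNReal.toReal_zero]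

lemma aux_mem_S (hμ : μ (Icc (-M) M)ᶜ = 0) {u : ℝ} (hu : u ≤ 1) :
    M ∈ {x : ℝ | u ≤ cdf μ x} := by
  simp only [mem_setOf_eq, aux_cdf_one hμ le_rfl]; exact hu

lemma aux_lb (hμ : μ (Icc (-M) M)ᶜ = 0) {u : ℝ} (hu : 0 < u) :
    ∀ x ∈ {x : ℝ | u ≤ cdf μ x}, -M ≤ x := by
  intro x hx
  by_contra h
  push_neg at h
  rw [mem_setOf_eq, aux_cdf_zero hμ h] at hx
  linarith

lemma aux_bddBelow (hμ : μ (Icc (-M) M)ᶜ = 0) {u : ℝ} (hu : 0 < u) :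
    BddBelow {x : ℝ | u ≤ cdf μ x} := ⟨-M, aux_lb hμ hu⟩

lemma quantile_le_M (hμ : μ (Icc (-M) M)ᶜ = 0) {u : ℝ} (hu : u ∈ Ioo (0:ℝ) 1) :
    quantile μ u ≤ M :=
  csInf_le (aux_bddBelow hμ hu.1) (aux_mem_S hμ hu.2.le)

lemma neg_M_le_quantile (hμ : μ (Icc (-M) M)ᶜ = 0) {u : ℝ} (hu : u ∈ Ioo (0:ℝ) 1) :
    -M ≤ quantile μ u :=
  le_csInf ⟨M, aux_mem_S hμ hu.2.le⟩ (aux_lb hμ hu.1)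

lemma le_cdf_quantile (hμ : μ (Icc (-M) M)ᶜ = 0) {u : ℝ} (hu : u ∈ Ioo (0:ℝ) 1) :
    u ≤ cdf μ (quantile μ u) := by
  by_contra h
  push_neg at h
  set S := {x : ℝ | u ≤ cdf μ x} with hS
  set q := quantile μ u with hq
  have hrc : ContinuousWithinAt (cdf μ) (Ici q) q := (cdf μ).right_continuous q
  have hev : ∀ᶠ y in nhdsWithin q (Ici q), cdf μ y < u := hrc.eventually_lt_const h
  rw [eventually_nhdsWithin_iff] at hev
  rw [Metric.eventually_nhds_iff] at hev
  obtain ⟨ε, hε, hball⟩ := hev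
  have hlb : ∀ x ∈ S, q + ε ≤ x := by
    intro x hx
    by_contra hc
    push_neg at hc
    have hqx : q ≤ x := csInf_le (aux_bddBelow hμ hu.1) hx
    have : cdf μ x < u := hball (by rw [Real.dist_eq]; rw [abs_lt]; constructor <;> linarith) hqx
    exact absurd hx (by simpa [hS, mem_setOf_eq] using not_le.2 this)
  have : q + ε ≤ q := le_csInf ⟨M, aux_mem_S hμ hu.2.le⟩ hlb
  linarith

lemma quantile_le_iff (hμ : μ (Icc (-M) M)ᶜ = 0) {u x : ℝ} (hu : u ∈ Ioo (0:ℝ) 1) :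
    quantile μ u ≤ x ↔ u ≤ cdf μ x := by
  constructor
  · intro h
    exact (le_cdf_quantile hμ hu).trans (monotone_cdf μ h)
  · intro h
    exact csInf_le (aux_bddBelow hμ hu.1) h

lemma quantile_mono (hμ : μ (Icc (-M) M)ᶜ = 0) {u v : ℝ} (hu : u ∈ Ioo (0:ℝ) 1)
    (hv : v ∈ Ioo (0:ℝ) 1) (huv : u ≤ v) : quantile μ u ≤ quantile μ v :=
  csInf_le_csInf (aux_bddBelow hμ hu.1) ⟨M, aux_mem_S hμ hv.2.le⟩
    (fun x hx => le_trans huv hx)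

end aux

/-- Monotone extension of the quantile function. -/
noncomputable def gext (M : ℝ) (μ : Measure ℝ) (u : ℝ) : ℝ :=
  if u ≤ 0 then -M else if 1 ≤ u then M else quantile μ u

lemma gext_eq {M : ℝ} {μ : Measure ℝ} {u : ℝ} (hu : u ∈ Ioo (0:ℝ) 1) :
    gext M μ u = quantile μ u := by
  simp only [gext, if_neg (not_le.2 hu.1), if_neg (not_le.2 hu.2)]

lemma gext_mono {M : ℝ} {μ : Measure ℝ} [IsProbabilityMeasure μ]
    (hμ : μ (Icc (-M) M)ᶜ = 0) : Monotone (gext M μ) := by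
  have hM : 0 ≤ M := aux_M_nonneg hμ
  intro u v huv
  unfold gext
  split_ifs with h1 h2 h3 h4 h5 <;> try linarith
  · exact neg_M_le_quantile hμ ⟨by linarith, by linarith⟩
  · exact quantile_le_M hμ ⟨by linarith, by linarith⟩
  · exact quantile_mono hμ ⟨by linarith, by linarith⟩ ⟨by linarith, by linarith⟩ huv

lemma gext_mem {M : ℝ} {μ : Measure ℝ} [IsProbabilityMeasure μ]
    (hμ : μ (Icc (-M) M)ᶜ = 0) {u : ℝ} (hu : u ∈ Ioo (0:ℝ) 1) :
    gext M μ u ∈ Icc (-M) M := by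
  rw [gext_eq hu]
  exact ⟨neg_M_le_quantile hμ hu, quantile_le_M hμ hu⟩

lemma xor_le_right (a b x : ℝ) : Xor' (a ≤ x) (b ≤ x) ↔ x ∈ Ico (min a b) (max a b) := by
  simp only [mem_Ico, min_le_iff, lt_max_iff, Xor']
  constructor
  · rintro (⟨h1, h2⟩ | ⟨h1, h2⟩)
    · exact ⟨Or.inl h1, Or.inr (not_le.1 h2)⟩
    · exact ⟨Or.inr h1, Or.inl (not_le.1 h2)⟩
  · rintro ⟨h1 | h1, h2 | h2⟩
    · exact absurd h1 (not_le.2 h2)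
    · exact Or.inl ⟨h1, not_le.2 h2⟩
    · exact Or.inr ⟨h1, not_le.2 h2⟩
    · exact absurd h1 (not_le.2 h2)

lemma xor_le_left (a b u : ℝ) : Xor' (u ≤ a) (u ≤ b) ↔ u ∈ Ioc (min a b) (max a b) := by
  simp only [mem_Ioc, min_lt_iff, le_max_iff, Xor']
  rcases le_total a b with h | h
  · constructor
    · rintro (⟨h1, h2⟩ | ⟨h1, h2⟩)
      · exact absurd (h1.trans h) h2
      · exact ⟨Or.inl (lt_of_not_ge h2), Or.inr h1⟩
    · rintro ⟨h1 | h1, h2 | h2⟩ <;> [skip; skip; skip; skip]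
      · exact Or.inl ⟨h2, by linarith⟩
      · exact Or.inr ⟨h2, not_le.2 h1⟩
      · exact Or.inl ⟨h2, by linarith⟩
      · exact Or.inr ⟨h2, not_le.2 (by linarith)⟩
  · constructor
    · rintro (⟨h1, h2⟩ | ⟨h1, h2⟩)
      · exact ⟨Or.inr (lt_of_not_ge h2), Or.inl h1⟩
      · exact absurd (h1.trans h) h2
    · rintro ⟨h1 | h1, h2 | h2⟩ <;> [skip; skip; skip; skip]
      · exact Or.inl ⟨h2, not_le.2 (by linarith)⟩
      · exact Or.inr ⟨h2, by linarith⟩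
      · exact Or.inl ⟨h2, not_le.2 h1⟩
      · exact Or.inr ⟨h2, by linarith⟩

/-- Squared Wasserstein-2 distance between measures on ℝ, via the quantile representation. -/
noncomputable def W2sq (μ ν : Measure ℝ) : ℝ :=
  ∫ u in Ioo (0:ℝ) 1, (quantile μ u - quantile ν u) ^ 2

/-- If `μ` and `ν` are probability measures supported in an interval of length `2M`, then
`W₂²(μ, ν) ≤ 4 M² ⋅ sup_t |F_μ(t) − F_ν(t)|`. -/
theorem W2sq_le_kolmogorov (M : ℝ) (μ ν : Measure ℝ)
    [IsProbabilityMeasure μ] [IsProbabilityMeasure ν]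
    (hμ : μ (Icc (-M) M)ᶜ = 0) (hν : ν (Icc (-M) M)ᶜ = 0) :
    W2sq μ ν ≤ 4 * M ^ 2 * ⨆ t : ℝ, |cdf μ t - cdf ν t| := by
  have hM : 0 ≤ M := aux_M_nonneg hμ
  set s : ℝ := ⨆ t : ℝ, |cdf μ t - cdf ν t| with hs_def
  have hbdd : BddAbove (range fun t : ℝ => |cdf μ t - cdf ν t|) := by
    refine ⟨1, ?_⟩
    rintro _ ⟨t, rfl⟩
    have h1 := cdf_nonneg μ t; have h2 := cdf_le_one μ t
    have h3 := cdf_nonneg ν t; have h4 := cdf_le_one ν t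
    rw [abs_le]; constructor <;> linarith
  have hs_le : ∀ t : ℝ, |cdf μ t - cdf ν t| ≤ s := fun t => le_ciSup hbdd t
  have hs0 : 0 ≤ s := le_trans (abs_nonneg _) (hs_le 0)
  -- the region between the graphs of the two cdfs, restricted to u ∈ (0,1)
  set A : Set (ℝ × ℝ) :=
    {p : ℝ × ℝ | p.1 ∈ Ioo (0:ℝ) 1 ∧ Xor' (p.1 ≤ cdf μ p.2) (p.1 ≤ cdf ν p.2)} with hA_def
  have hs1 : MeasurableSet {p : ℝ × ℝ | p.1 ≤ cdf μ p.2} :=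
    measurableSet_le measurable_fst ((monotone_cdf μ).measurable.comp measurable_snd)
  have hs2 : MeasurableSet {p : ℝ × ℝ | p.1 ≤ cdf ν p.2} :=
    measurableSet_le measurable_fst ((monotone_cdf ν).measurable.comp measurable_snd)
  have hA : MeasurableSet A := by
    have : A = {p : ℝ × ℝ | p.1 ∈ Ioo (0:ℝ) 1} ∩
        (({p : ℝ × ℝ | p.1 ≤ cdf μ p.2} \ {p : ℝ × ℝ | p.1 ≤ cdf ν p.2}) ∪
         ({p : ℝ × ℝ | p.1 ≤ cdf ν p.2} \ {p : ℝ × ℝ | p.1 ≤ cdf μ p.2})) := by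
      ext p
      simp only [hA_def, mem_setOf_eq, mem_inter_iff, mem_union, mem_diff, Xor', xor_def]
    rw [this]
    exact (measurable_fst measurableSet_Ioo).inter ((hs1.diff hs2).union (hs2.diff hs1))
  -- u-sections
  have hsec1 : ∀ u ∈ Ioo (0:ℝ) 1, Prod.mk u ⁻¹' A =
      Ico (min (quantile μ u) (quantile ν u)) (max (quantile μ u) (quantile ν u)) := by
    intro u hu
    ext x
    simp only [mem_preimage, hA_def, mem_setOf_eq, hu, true_and]
    rw [← quantile_le_iff hμ hu, ← quantile_le_iff hν hu]
    exact xor_le_right _ _ _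
  have hsec0 : ∀ u ∉ Ioo (0:ℝ) 1, Prod.mk u ⁻¹' A = (∅ : Set ℝ) := by
    intro u hu
    ext x
    simp only [mem_preimage, hA_def, mem_setOf_eq, hu, false_and, mem_empty_iff_false]
  -- x-sections
  have hsec2 : ∀ x : ℝ, (fun u => (u, x)) ⁻¹' A =
      Ioo (0:ℝ) 1 ∩ Ioc (min (cdf μ x) (cdf ν x)) (max (cdf μ x) (cdf ν x)) := by
    intro x
    ext u
    simp only [mem_preimage, hA_def, mem_setOf_eq, mem_inter_iff]
    rw [xor_le_left]
  have hvol_sec2 : ∀ x : ℝ, volume ((fun u => (u, x)) ⁻¹' A) =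
      ENNReal.ofReal |cdf μ x - cdf ν x| := by
    intro x
    rw [hsec2 x]
    set a := cdf μ x; set b := cdf ν x
    have ha0 : (0:ℝ) ≤ min a b := le_min (cdf_nonneg μ x) (cdf_nonneg ν x)
    have hb1 : max a b ≤ 1 := max_le (cdf_le_one μ x) (cdf_le_one ν x)
    have hsub1 : Ioo (min a b) (max a b) ⊆ Ioo (0:ℝ) 1 ∩ Ioc (min a b) (max a b) := by
      intro u hu
      exact ⟨⟨lt_of_le_of_lt ha0 hu.1, lt_of_lt_of_le hu.2 hb1⟩, hu.1, hu.2.le⟩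
    have hsub2 : Ioo (0:ℝ) 1 ∩ Ioc (min a b) (max a b) ⊆ Ioc (min a b) (max a b) :=
      inter_subset_right
    have h1 : volume (Ioo (min a b) (max a b)) = ENNReal.ofReal |a - b| := by
      rw [Real.volume_Ioo, max_sub_min_eq_abs, abs_sub_comm]
    have h2 : volume (Ioc (min a b) (max a b)) = ENNReal.ofReal |a - b| := by
      rw [Real.volume_Ioc, max_sub_min_eq_abs, abs_sub_comm]
    refine le_antisymm ?_ ?_
    · exact h2 ▸ measure_mono hsub2
    · exact h1 ▸ measure_mono hsub1
  -- Fubini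
  have key : ∫⁻ u in Ioo (0:ℝ) 1, ENNReal.ofReal |quantile μ u - quantile ν u| =
      ∫⁻ x, ENNReal.ofReal |cdf μ x - cdf ν x| := by
    have h1 : (volume.prod volume) A = ∫⁻ u, volume (Prod.mk u ⁻¹' A) :=
      Measure.prod_apply hA
    have h2 : (volume.prod volume) A = ∫⁻ x, volume ((fun u => (u, x)) ⁻¹' A) :=
      Measure.prod_apply_symm hA
    have h3 : ∫⁻ u, volume (Prod.mk u ⁻¹' A) =
        ∫⁻ u in Ioo (0:ℝ) 1, ENNReal.ofReal |quantile μ u - quantile ν u| := by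
      rw [← lintegral_indicator measurableSet_Ioo]
      refine lintegral_congr fun u => ?_
      by_cases hu : u ∈ Ioo (0:ℝ) 1
      · rw [indicator_of_mem hu, hsec1 u hu, Real.volume_Ico, max_sub_min_eq_abs, abs_sub_comm]
      · rw [indicator_of_notMem hu, hsec0 u hu, measure_empty]
    have h4 : ∫⁻ x, volume ((fun u => (u, x)) ⁻¹' A) =
        ∫⁻ x, ENNReal.ofReal |cdf μ x - cdf ν x| :=
      lintegral_congr fun x => hvol_sec2 x
    rw [← h3, ← h4, ← h1, ← h2]
  -- bound the right-hand side
  have hbound : ∫⁻ x, ENNReal.ofReal |cdf μ x - cdf ν x| ≤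
      ENNReal.ofReal s * ENNReal.ofReal (2 * M) := by
    have hzero : ∀ x ∉ Icc (-M) M, ENNReal.ofReal |cdf μ x - cdf ν x| = 0 := by
      intro x hx
      rw [mem_Icc, not_and_or] at hx
      rcases hx with hx | hx
      · push_neg at hx
        rw [aux_cdf_zero hμ hx, aux_cdf_zero hν hx]
        simp
      · push_neg at hx
        rw [aux_cdf_one hμ hx.le, aux_cdf_one hν hx.le]
        simp
    calc ∫⁻ x, ENNReal.ofReal |cdf μ x - cdf ν x|
        = ∫⁻ x in Icc (-M) M, ENNReal.ofReal |cdf μ x - cdf ν x| := by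
          rw [← lintegral_indicator measurableSet_Icc]
          refine lintegral_congr fun x => ?_
          by_cases hx : x ∈ Icc (-M) M
          · rw [indicator_of_mem hx]
          · rw [indicator_of_notMem hx, hzero x hx]
      _ ≤ ∫⁻ _ in Icc (-M) M, ENNReal.ofReal s :=
          setLIntegral_mono measurable_const fun x _ => ENNReal.ofReal_le_ofReal (hs_le x)
      _ = ENNReal.ofReal s * volume (Icc (-M) M) := setLIntegral_const _ _
      _ = ENNReal.ofReal s * ENNReal.ofReal (2 * M) := by
          rw [Real.volume_Icc]
          ring_nf
  -- measurability / integrability of the extended quantile functions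
  have hgm : Measurable (fun u => gext M μ u - gext M ν u) :=
    ((gext_mono hμ).measurable).sub ((gext_mono hν).measurable)
  have habs_le : ∀ u ∈ Ioo (0:ℝ) 1, |gext M μ u - gext M ν u| ≤ 2 * M := by
    intro u hu
    have h1 := gext_mem hμ hu
    have h2 := gext_mem hν hu
    rw [abs_le]
    constructor <;> [linarith [h1.1, h2.2]; linarith [h1.2, h2.1]]
  have hIoo_fin : volume (Ioo (0:ℝ) 1) ≠ ⊤ := by
    rw [Real.volume_Ioo]; exact ENNReal.ofReal_ne_top
  have hint_sq : IntegrableOn (fun u => (gext M μ u - gext M ν u) ^ 2) (Ioo (0:ℝ) 1) volume := by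
    refine Measure.integrableOn_of_bounded (M := (2*M)^2) hIoo_fin
      ((hgm.pow_const 2).aestronglyMeasurable) ?_
    refine (ae_restrict_iff' measurableSet_Ioo).2 (ae_of_all _ fun u hu => ?_)
    rw [Real.norm_eq_abs, abs_pow]
    have := habs_le u hu
    have h0 : (0:ℝ) ≤ |gext M μ u - gext M ν u| := abs_nonneg _
    nlinarith
  have hint_abs : IntegrableOn (fun u => |gext M μ u - gext M ν u|) (Ioo (0:ℝ) 1) volume := by
    refine Measure.integrableOn_of_bounded (M := 2*M) hIoo_fin
      (hgm.abs.aestronglyMeasurable) ?_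
    refine (ae_restrict_iff' measurableSet_Ioo).2 (ae_of_all _ fun u hu => ?_)
    rw [Real.norm_eq_abs, abs_abs]
    exact habs_le u hu
  have hint_mul : IntegrableOn (fun u => 2 * M * |gext M μ u - gext M ν u|) (Ioo (0:ℝ) 1)
      volume := hint_abs.const_mul _
  -- the L¹ bound on the quantile difference
  have habs_int_le : ∫ u in Ioo (0:ℝ) 1, |gext M μ u - gext M ν u| ≤ s * (2 * M) := by
    have heq1 : ∫ u in Ioo (0:ℝ) 1, |gext M μ u - gext M ν u| =
        (∫⁻ u in Ioo (0:ℝ) 1, ENNReal.ofReal |gext M μ u - gext M ν u|).toReal := by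
      refine integral_eq_lintegral_of_nonneg_ae (ae_of_all _ fun u => abs_nonneg _) ?_
      exact hgm.abs.aestronglyMeasurable
    have heq2 : ∫⁻ u in Ioo (0:ℝ) 1, ENNReal.ofReal |gext M μ u - gext M ν u| =
        ∫⁻ u in Ioo (0:ℝ) 1, ENNReal.ofReal |quantile μ u - quantile ν u| := by
      refine setLIntegral_congr_fun measurableSet_Ioo (fun u hu => ?_)
      rw [gext_eq hu, gext_eq hu]
    rw [heq1, heq2, key]
    calc (∫⁻ x, ENNReal.ofReal |cdf μ x - cdf ν x|).toReal
        ≤ (ENNReal.ofReal s * ENNReal.ofReal (2 * M)).toReal := by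
          refine ENNReal.toReal_mono ?_ hbound
          exact ENNReal.mul_ne_top ENNReal.ofReal_ne_top ENNReal.ofReal_ne_top
      _ = s * (2 * M) := by
          rw [← ENNReal.ofReal_mul hs0, ENNReal.toReal_ofReal (by positivity)]
  -- main chain
  calc W2sq μ ν = ∫ u in Ioo (0:ℝ) 1, (gext M μ u - gext M ν u) ^ 2 := by
        refine setIntegral_congr_fun measurableSet_Ioo fun u hu => ?_
        rw [gext_eq hu, gext_eq hu]
    _ ≤ ∫ u in Ioo (0:ℝ) 1, 2 * M * |gext M μ u - gext M ν u| := by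
        refine setIntegral_mono_on hint_sq hint_mul measurableSet_Ioo fun u hu => ?_
        rw [← sq_abs]
        have h1 := habs_le u hu
        have h0 : (0:ℝ) ≤ |gext M μ u - gext M ν u| := abs_nonneg _
        nlinarith
    _ = 2 * M * ∫ u in Ioo (0:ℝ) 1, |gext M μ u - gext M ν u| := integral_const_mul _ _
    _ ≤ 2 * M * (s * (2 * M)) := by
        refine mul_le_mul_of_nonneg_left habs_int_le (by positivity)
    _ = 4 * M ^ 2 * s := by ring
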